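/- Assume conditions (1.2) and (2.1), suppose ∫_{-∞}^0 dt/r(t) = ∫_0^∞ dt/r(t) = ∞, let u, v be a principal fundamental system of solutions of (r z')' = q z, and assume that for some p ∈ (1,∞) the Green operator G is bounded on L_p(ℝ). Then v(x) → 0 as x → −∞ and u(x) → 0 as x → +∞. -/

import Mathlib

open MeasureTheory Filter Topology
open scoped ENNReal RealInnerProductSpace

noncomputable section

/-- Conditions (1.2): `r, q` measurable, `r > 0`, `q ≥ 0`, with `1/r` and `q`
locally Lebesgue integrable on `ℝ`. -/
def Cond12 (r q : ℝ → ℝ) : Prop :=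
  Measurable r ∧ Measurable q ∧ (∀ x, 0 < r x) ∧ (∀ x, 0 ≤ q x) ∧
    LocallyIntegrable (fun t => 1 / r t) volume ∧ LocallyIntegrable q volume

/-- Condition (1.3): for every `x`,
`(∫_{x-d}^x dt/r(t)) · (∫_{x-d}^x q(t) dt) → ∞` as `|d| → ∞`. -/
def Cond13 (r q : ℝ → ℝ) : Prop :=
  ∀ x : ℝ, Tendsto (fun d : ℝ => (∫ t in x - d..x, 1 / r t) * (∫ t in x - d..x, q t))
    (cocompact ℝ) atTop

/-- Condition (2.1): `∫_{-∞}^x q > 0` and `∫_x^∞ q > 0` for every `x`. -/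
def Cond21 (q : ℝ → ℝ) : Prop :=
  ∀ x : ℝ, 0 < ∫⁻ t in Set.Iic x, ENNReal.ofReal (q t) ∧
    0 < ∫⁻ t in Set.Ici x, ENNReal.ofReal (q t)

/-- A principal fundamental system of solutions `u, v` (with a.e. derivatives
`u', v'`) of the equation `(r z')' = q z`:  `u, v, r u', r v'` are locally
absolutely continuous (expressed through the integral identities below),
`(r u')' = q u` and `(r v')' = q v` a.e., `u > 0`, `v > 0`, `v' ≥ 0`, `u' ≤ 0`,
`r (v' u - u' v) ≡ 1`, `v/u → 0` at `-∞`, `u/v → 0` at `+∞`,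
`∫_{-∞}^0 dt/(r u²) < ∞` and `∫_0^∞ dt/(r v²) < ∞`. -/
structure PFSS (r q u v u' v' : ℝ → ℝ) : Prop where
  u_pos : ∀ x, 0 < u x
  v_pos : ∀ x, 0 < v x
  u'_nonpos : ∀ x, u' x ≤ 0
  v'_nonneg : ∀ x, 0 ≤ v' x
  u'_intble : ∀ a b : ℝ, IntervalIntegrable u' volume a b
  v'_intble : ∀ a b : ℝ, IntervalIntegrable v' volume a b
  u_deriv : ∀ a b : ℝ, u b - u a = ∫ t in a..b, u' t
  v_deriv : ∀ a b : ℝ, v b - v a = ∫ t in a..b, v' t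
  ru'_deriv : ∀ a b : ℝ, r b * u' b - r a * u' a = ∫ t in a..b, q t * u t
  rv'_deriv : ∀ a b : ℝ, r b * v' b - r a * v' a = ∫ t in a..b, q t * v t
  wronskian : ∀ x, r x * (v' x * u x - u' x * v x) = 1
  ratio_bot : Tendsto (fun x => v x / u x) atBot (𝓝 0)
  ratio_top : Tendsto (fun x => u x / v x) atTop (𝓝 0)
  int_u : ∫⁻ t in Set.Iic (0:ℝ), ENNReal.ofReal (1 / (r t * u t ^ 2)) < ⊤
  int_v : ∫⁻ t in Set.Ici (0:ℝ), ENNReal.ofReal (1 / (r t * v t ^ 2)) < ⊤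

/-- The Green kernel `G(x,t) = u(x) v(t)` for `x ≥ t`, `u(t) v(x)` for `x ≤ t`. -/
def greenKernel (u v : ℝ → ℝ) (x t : ℝ) : ℝ :=
  if t ≤ x then u x * v t else u t * v x

/-- The space `L_p(ℝ)` (with respect to Lebesgue measure). -/
abbrev LpR (p : ℝ≥0∞) : Type := Lp ℝ p (volume : Measure ℝ)

/-- `G` is (a bounded realization on `L_p` of) the Green operator
`(G f)(x) = ∫_ℝ G(x,t) f(t) dt`. -/
def IsGreenOp (u v : ℝ → ℝ) (p : ℝ≥0∞) [Fact (1 ≤ p)]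
    (G : LpR p →L[ℝ] LpR p) : Prop :=
  ∀ f : LpR p,
    (G f : ℝ → ℝ) =ᵐ[volume] fun x => ∫ t, greenKernel u v x t * (f : ℝ → ℝ) t

/-- `d₁` solves `(∫_{x-d}^x dt/r)(∫_{x-d}^x q dt) = 1`, `d₁ > 0`. -/
def IsD1 (r q d₁ : ℝ → ℝ) : Prop :=
  ∀ x : ℝ, 0 < d₁ x ∧
    (∫ t in x - d₁ x..x, 1 / r t) * (∫ t in x - d₁ x..x, q t) = 1

/-- `d₂` solves `(∫_x^{x+d} dt/r)(∫_x^{x+d} q dt) = 1`, `d₂ > 0`. -/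
def IsD2 (r q d₂ : ℝ → ℝ) : Prop :=
  ∀ x : ℝ, 0 < d₂ x ∧
    (∫ t in x..x + d₂ x, 1 / r t) * (∫ t in x..x + d₂ x, q t) = 1

/-- `φ(x) = ∫_{x-d₁(x)}^x dt/r(t)`. -/
def phiF (r d₁ : ℝ → ℝ) (x : ℝ) : ℝ := ∫ t in x - d₁ x..x, 1 / r t

/-- `ψ(x) = ∫_x^{x+d₂(x)} dt/r(t)`. -/
def psiF (r d₂ : ℝ → ℝ) (x : ℝ) : ℝ := ∫ t in x..x + d₂ x, 1 / r t

/-- `h(x) = φ(x)ψ(x)/(φ(x)+ψ(x))`. -/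
def hF (r d₁ d₂ : ℝ → ℝ) (x : ℝ) : ℝ :=
  phiF r d₁ x * psiF r d₂ x / (phiF r d₁ x + psiF r d₂ x)

/-- `d` solves `∫_{x-d(x)}^{x+d(x)} dt/(r(t)h(t)) = 1`, `d > 0`. -/
def IsD (r h d : ℝ → ℝ) : Prop :=
  ∀ x : ℝ, 0 < d x ∧ (∫ t in x - d x..x + d x, 1 / (r t * h t)) = 1

/-- `s` solves `∫_{x-s(x)}^{x+s(x)} dt/(r(t)ρ(t)) = 1`, `s > 0`. -/
def IsS (r ρ s : ℝ → ℝ) : Prop :=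
  ∀ x : ℝ, 0 < s x ∧ (∫ t in x - s x..x + s x, 1 / (r t * ρ t)) = 1


/- An `ℝ`-valued function that is a.e. bounded below in norm by a positive constant on a
set of infinite measure is not in `ℒp` for `p ≠ 0, ∞`. -/
lemma not_memLp_of_ae_ge {p : ℝ≥0∞} (hp0 : p ≠ 0) (hpt : p ≠ ⊤) {g : ℝ → ℝ} {c : ℝ}
    (hc : 0 < c) {s : Set ℝ} (hms : MeasurableSet s) (hs : volume s = ⊤)
    (h : ∀ᵐ x ∂(volume : Measure ℝ), x ∈ s → c ≤ ‖g x‖) : ¬ MemLp g p volume := by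
  intro hmem
  have hpos : 0 < p.toReal := ENNReal.toReal_pos hp0 hpt
  have h1 : eLpNorm g p volume < ⊤ := hmem.2
  rw [eLpNorm_eq_lintegral_rpow_enorm_toReal hp0 hpt] at h1
  change (∫⁻ x, (‖g x‖₊ : ℝ≥0∞) ^ p.toReal) ^ (1 / p.toReal) < ⊤ at h1
  have hlt : (∫⁻ x, (‖g x‖₊ : ℝ≥0∞) ^ p.toReal) < ⊤ := by
    by_contra hcon
    rw [not_lt, top_le_iff] at hcon
    rw [hcon, ENNReal.top_rpow_of_pos (by positivity : (0:ℝ) < 1 / p.toReal)] at h1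
    exact lt_irrefl _ h1
  have hle : ∫⁻ _ in s, (ENNReal.ofReal c) ^ p.toReal
      ≤ ∫⁻ x in s, (‖g x‖₊ : ℝ≥0∞) ^ p.toReal := by
    refine lintegral_mono_ae ?_
    filter_upwards [(ae_restrict_iff' hms).mpr h] with x hx
    refine ENNReal.rpow_le_rpow ?_ hpos.le
    rw [← ENNReal.ofReal_coe_nnreal, coe_nnnorm]
    exact ENNReal.ofReal_le_ofReal hx
  have hEQ : (∫⁻ _ in s, (ENNReal.ofReal c) ^ p.toReal : ℝ≥0∞) = ⊤ := by
    rw [setLIntegral_const, hs, ENNReal.mul_top]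
    exact (ENNReal.rpow_pos (ENNReal.ofReal_pos.2 hc) ENNReal.ofReal_ne_top).ne'
  have : (⊤ : ℝ≥0∞) ≤ ∫⁻ x, (‖g x‖₊ : ℝ≥0∞) ^ p.toReal := by
    calc (⊤ : ℝ≥0∞) = ∫⁻ _ in s, (ENNReal.ofReal c) ^ p.toReal := hEQ.symm
      _ ≤ ∫⁻ x in s, (‖g x‖₊ : ℝ≥0∞) ^ p.toReal := hle
      _ ≤ ∫⁻ x, (‖g x‖₊ : ℝ≥0∞) ^ p.toReal := setLIntegral_le_lintegral s _
  exact absurd (top_le_iff.mp this) hlt.ne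

/-- **Theorem 5.6.** Assume (1.2), (2.1) and
`∫_{-∞}^0 dt/r = ∫_0^∞ dt/r = ∞`, let `u, v` be a principal FSS, and assume
the Green operator is bounded on `L_p(ℝ)` for some `p ∈ (1,∞)`.  Then
`v(x) → 0` as `x → -∞` and `u(x) → 0` as `x → +∞`. -/
theorem uv_tendsto_zero_of_green_bounded
    (r q u v u' v' : ℝ → ℝ) (p : ℝ≥0∞) (hp1 : 1 < p) (hp2 : p ≠ ⊤)
    [Fact (1 ≤ p)]
    (h12 : Cond12 r q) (h21 : Cond21 q)
    (hIic : (∫⁻ t in Set.Iic (0:ℝ), ENNReal.ofReal (1 / r t)) = ⊤)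
    (hIci : (∫⁻ t in Set.Ici (0:ℝ), ENNReal.ofReal (1 / r t)) = ⊤)
    (hfss : PFSS r q u v u' v')
    (G : LpR p →L[ℝ] LpR p) (hG : IsGreenOp u v p G) :
    Tendsto v atBot (𝓝 0) ∧ Tendsto u atTop (𝓝 0) := by
  have hp0 : p ≠ 0 := fun h => by simp [h] at hp1
  -- monotonicity of u and v
  have hu_anti : Antitone u := by
    intro a b hab
    have hd := hfss.u_deriv a b
    have : (∫ t in a..b, u' t) ≤ 0 := by
      rw [intervalIntegral.integral_of_le hab]
      exact integral_nonpos fun x => hfss.u'_nonpos x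
    linarith
  have hv_mono : Monotone v := by
    intro a b hab
    have hd := hfss.v_deriv a b
    have : 0 ≤ ∫ t in a..b, v' t :=
      intervalIntegral.integral_nonneg hab fun x _ => hfss.v'_nonneg x
    linarith
  have hu_bdd : BddBelow (Set.range u) :=
    ⟨0, by rintro _ ⟨x, rfl⟩; exact (hfss.u_pos x).le⟩
  have hv_bdd : BddBelow (Set.range v) :=
    ⟨0, by rintro _ ⟨x, rfl⟩; exact (hfss.v_pos x).le⟩
  have hu_tend : Tendsto u atTop (𝓝 (⨅ x, u x)) := tendsto_atTop_ciInf hu_anti hu_bdd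
  have hv_tend : Tendsto v atBot (𝓝 (⨅ x, v x)) := tendsto_atBot_ciInf hv_mono hv_bdd
  have hL0 : 0 ≤ ⨅ x, u x := le_ciInf fun x => (hfss.u_pos x).le
  have hM0 : 0 ≤ ⨅ x, v x := le_ciInf fun x => (hfss.v_pos x).le
  -- the test function: indicator of [0,1]
  have hμIcc : volume (Set.Icc (0:ℝ) 1) ≠ ⊤ := by
    rw [Real.volume_Icc]; exact ENNReal.ofReal_ne_top
  set f : LpR p := indicatorConstLp p measurableSet_Icc hμIcc (1:ℝ) with hf_def
  have hgf := hG f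
  -- rewrite the integral against f as a set integral
  have hF : ∀ x : ℝ, (∫ t, greenKernel u v x t * (f : ℝ → ℝ) t)
      = ∫ t in Set.Icc (0:ℝ) 1, greenKernel u v x t := by
    intro x
    rw [← integral_indicator measurableSet_Icc]
    refine integral_congr_ae ?_
    filter_upwards [indicatorConstLp_coeFn (p := p) (μ := (volume : Measure ℝ))
      (hs := measurableSet_Icc) (hμs := hμIcc) (c := (1:ℝ))] with t ht
    rw [ht]
    by_cases hmem : t ∈ Set.Icc (0:ℝ) 1
    · simp [Set.indicator_of_mem hmem]
    · simp [Set.indicator_of_notMem hmem]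
  have hIntv : IntegrableOn v (Set.Icc (0:ℝ) 1) volume :=
    (hv_mono.monotoneOn _).integrableOn_isCompact isCompact_Icc
  have hIntu : IntegrableOn u (Set.Icc (0:ℝ) 1) volume :=
    (hu_anti.antitoneOn _).integrableOn_of_measure_ne_top
      (a := (0:ℝ)) (b := 1) ⟨Set.left_mem_Icc.2 zero_le_one, fun x hx => hx.1⟩
      ⟨Set.right_mem_Icc.2 zero_le_one, fun x hx => hx.2⟩
      (by rw [Real.volume_Icc]; exact ENNReal.ofReal_ne_top) measurableSet_Icc
  have hcv : v 0 ≤ ∫ t in Set.Icc (0:ℝ) 1, v t := by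
    have := setIntegral_mono_on (f := fun _ => v 0) (g := v)
      (integrableOn_const (by rw [Real.volume_Icc]; simp))
      hIntv measurableSet_Icc (fun x hx => hv_mono hx.1)
    rwa [setIntegral_const, Real.volume_real_Icc_of_le zero_le_one, show (1:ℝ) - 0 = 1 by ring,
      one_smul] at this
  have hcu : u 1 ≤ ∫ t in Set.Icc (0:ℝ) 1, u t := by
    have := setIntegral_mono_on (f := fun _ => u 1) (g := u)
      (integrableOn_const (by rw [Real.volume_Icc]; simp))
      hIntu measurableSet_Icc (fun x hx => hu_anti hx.2)
    rwa [setIntegral_const, Real.volume_real_Icc_of_le zero_le_one, show (1:ℝ) - 0 = 1 by ring,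
      one_smul] at this
  have hcv0 : 0 < ∫ t in Set.Icc (0:ℝ) 1, v t := lt_of_lt_of_le (hfss.v_pos 0) hcv
  have hcu0 : 0 < ∫ t in Set.Icc (0:ℝ) 1, u t := lt_of_lt_of_le (hfss.u_pos 1) hcu
  have hmem : MemLp ((G f : LpR p) : ℝ → ℝ) p volume := Lp.memLp (G f)
  constructor
  · -- v → 0 at -∞
    rcases eq_or_lt_of_le hM0 with hM | hM
    · rw [← hM] at hv_tend; exact hv_tend
    · exfalso
      set c := (∫ t in Set.Icc (0:ℝ) 1, u t) * (⨅ x, v x) with hc_def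
      have hc : 0 < c := mul_pos hcu0 hM
      refine not_memLp_of_ae_ge hp0 hp2 hc (s := Set.Iic (-1)) measurableSet_Iic Real.volume_Iic ?_ hmem
      filter_upwards [hgf] with x hx hx1
      rw [hx, hF x]
      have hxeq : (∫ t in Set.Icc (0:ℝ) 1, greenKernel u v x t)
          = (∫ t in Set.Icc (0:ℝ) 1, u t) * v x := by
        rw [← integral_mul_const]
        refine setIntegral_congr_fun measurableSet_Icc fun t ht => ?_
        have : ¬ (t ≤ x) := by
          have h1 := ht.1
          have h2 : x ≤ -1 := hx1
          push_neg
          linarith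
        simp [greenKernel, this]
      rw [hxeq, Real.norm_eq_abs]
      refine le_trans ?_ (le_abs_self _)
      exact mul_le_mul_of_nonneg_left (ciInf_le hv_bdd x) hcu0.le
  · -- u → 0 at +∞
    rcases eq_or_lt_of_le hL0 with hL | hL
    · rw [← hL] at hu_tend; exact hu_tend
    · exfalso
      set c := (⨅ x, u x) * (∫ t in Set.Icc (0:ℝ) 1, v t) with hc_def
      have hc : 0 < c := mul_pos hL hcv0
      refine not_memLp_of_ae_ge hp0 hp2 hc (s := Set.Ici 1) measurableSet_Ici Real.volume_Ici ?_ hmem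
      filter_upwards [hgf] with x hx hx1
      rw [hx, hF x]
      have hxeq : (∫ t in Set.Icc (0:ℝ) 1, greenKernel u v x t)
          = u x * ∫ t in Set.Icc (0:ℝ) 1, v t := by
        rw [← integral_const_mul]
        refine setIntegral_congr_fun measurableSet_Icc fun t ht => ?_
        have : t ≤ x := le_trans ht.2 hx1
        simp [greenKernel, this]
      rw [hxeq, Real.norm_eq_abs]
      refine le_trans ?_ (le_abs_self _)
      exact mul_le_mul_of_nonneg_right (ciInf_le hu_bdd x) hcv0.le
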